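/- With the notation of the two-variable orthogonal polynomials v_{n,m} built from Jacobi polynomials, each v_{n,m} is an eigenfunction of the differential operator (2/κ)·𝓛 with eigenvalue λ_{n+m} = -(n+m)(n+m+α₀+β+1), where 𝓛 = (κ/2)(y-x²)∂²_x + κx(1-y)∂_x∂_y + (κ/2)y(1-y)∂²_y - [(ρ₊+ρ₋+ρ₀+6)x + (ρ₊-ρ₋)]∂_x - [(ρ₊+ρ₋+ρ₀+6)y - (ρ₊+ρ₋+4)]∂_y, with α₀ = (2/κ)(ρ₀+2)-1, α_± = (2/κ)(ρ_±+2)-1, β = α₊+α₋+1. -/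

import Mathlib

open Filter Set Finset

noncomputable section

/-- The Jacobi polynomial `P_n^{(α,β)}(x)`, defined by its standard explicit formula
`P_n^{(α,β)}(x) = (Γ(α+n+1)/(n! Γ(α+β+n+1))) ∑_{m=0}^n C(n,m) (Γ(α+β+n+m+1)/Γ(α+m+1)) ((x-1)/2)^m`. -/
def jacobiP (α β : ℝ) (n : ℕ) (x : ℝ) : ℝ :=
  Real.Gamma (α + (n : ℝ) + 1) / ((n.factorial : ℝ) * Real.Gamma (α + β + (n : ℝ) + 1)) *
    ∑ m ∈ Finset.range (n + 1),
      (n.choose m : ℝ) * (Real.Gamma (α + β + (n : ℝ) + (m : ℝ) + 1) /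
        Real.Gamma (α + (m : ℝ) + 1)) * ((x - 1) / 2) ^ m
/-- The homogeneous degree-`n` polynomial `Q_n^{(α,β)}(x,y)` with
`Q_n^{(α,β)}(x,y) = yⁿ P_n^{(α,β)}(x/y)` for `y ≠ 0`. -/
def QJ (α β : ℝ) (n : ℕ) (x y : ℝ) : ℝ :=
  Real.Gamma (α + (n : ℝ) + 1) / ((n.factorial : ℝ) * Real.Gamma (α + β + (n : ℝ) + 1)) *
    ∑ m ∈ Finset.range (n + 1),
      (n.choose m : ℝ) * (Real.Gamma (α + β + (n : ℝ) + (m : ℝ) + 1) /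
        Real.Gamma (α + (m : ℝ) + 1)) * ((x - y) / 2) ^ m * y ^ (n - m)

/-- The two-variable polynomial `v_{n,m}(x,y) = P_m^{(α₀, β+2n)}(2y-1) · Q_n^{(α₊,α₋)}(x,y)`. -/
def vnm (ap am a0 β : ℝ) (n m : ℕ) (p : ℝ × ℝ) : ℝ :=
  jacobiP a0 (β + 2 * (n : ℝ)) m (2 * p.2 - 1) * QJ ap am n p.1 p.2

/-- The weight `Ψ(x,y) = 1_Δ(x,y) (y-x)^{α₊} (y+x)^{α₋} (1-y)^{α₀}` on the triangle
`Δ = {(x,y) : 0 < |x| < y < 1}`. -/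
def wtPsi (ap am a0 : ℝ) (p : ℝ × ℝ) : ℝ :=
  if 0 < |p.1| ∧ |p.1| < p.2 ∧ p.2 < 1 then
    (p.2 - p.1) ^ ap * (p.2 + p.1) ^ am * (1 - p.2) ^ a0
  else 0

/-- First-coordinate partial derivative. -/
def pdx (f : ℝ × ℝ → ℝ) (p : ℝ × ℝ) : ℝ := deriv (fun x => f (x, p.2)) p.1

/-- Second-coordinate partial derivative. -/
def pdy (f : ℝ × ℝ → ℝ) (p : ℝ × ℝ) : ℝ := deriv (fun y => f (p.1, y)) p.2

/-- The generator `𝓛` of the two-dimensional diffusion `(X, Y)`. -/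
def Lop (κ r0 rp rm : ℝ) (f : ℝ × ℝ → ℝ) (p : ℝ × ℝ) : ℝ :=
  κ / 2 * (p.2 - p.1 ^ 2) * pdx (pdx f) p + κ * p.1 * (1 - p.2) * pdy (pdx f) p +
    κ / 2 * p.2 * (1 - p.2) * pdy (pdy f) p -
    ((rp + rm + r0 + 6) * p.1 + (rp - rm)) * pdx f p -
    ((rp + rm + r0 + 6) * p.2 - (rp + rm + 4)) * pdy f p


namespace Stmt17Aux

def cc (a b : ℝ) (N j : ℕ) : ℝ :=
  (N.choose j : ℝ) * (Real.Gamma (a + b + (N : ℝ) + (j : ℝ) + 1) / Real.Gamma (a + (j : ℝ) + 1))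

lemma cc_rec (a b : ℝ) (ha : -1 < a) (hb : -1 < b) (N j : ℕ) (hj : j < N) :
    cc a b N (j+1) * (((j:ℝ)+1) * ((j:ℝ)+1+a)) =
      cc a b N j * (((N:ℝ)-(j:ℝ)) * (a+b+(N:ℝ)+(j:ℝ)+1)) := by
  have hNj : (1:ℝ) ≤ (N:ℝ) + (j:ℝ) := by
    have : (1:ℕ) ≤ N + j := by omega
    exact_mod_cast this
  have h1 : a + b + (N:ℝ) + (j:ℝ) + 1 ≠ 0 := by nlinarith
  have h2 : (0:ℝ) < a + (j:ℝ) + 1 := by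
    have : (0:ℝ) ≤ (j:ℝ) := Nat.cast_nonneg j
    linarith
  have hg2 : Real.Gamma (a + (j:ℝ) + 1) ≠ 0 := (Real.Gamma_pos_of_pos h2).ne'
  have hg2' : Real.Gamma (a + (j:ℝ) + 1 + 1) = (a + (j:ℝ) + 1) * Real.Gamma (a + (j:ℝ) + 1) :=
    Real.Gamma_add_one h2.ne'
  have hg1' : Real.Gamma (a + b + (N:ℝ) + (j:ℝ) + 1 + 1)
      = (a + b + (N:ℝ) + (j:ℝ) + 1) * Real.Gamma (a + b + (N:ℝ) + (j:ℝ) + 1) :=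
    Real.Gamma_add_one h1
  have hch : (N.choose (j+1) : ℝ) * ((j:ℝ)+1) = (N.choose j : ℝ) * ((N:ℝ)-(j:ℝ)) := by
    have := Nat.choose_succ_right_eq N j
    have h := congrArg (Nat.cast : ℕ → ℝ) this
    push_cast [Nat.cast_sub hj.le] at h
    linarith [h]
  unfold cc
  have e1 : a + b + (N:ℝ) + ((j:ℕ)+1 : ℕ) + 1 = a + b + (N:ℝ) + (j:ℝ) + 1 + 1 := by push_cast; ring
  have e2 : a + ((j:ℕ)+1 : ℕ) + 1 = a + (j:ℝ) + 1 + 1 := by push_cast; ring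
  rw [e1, e2, hg1', hg2']
  field_simp
  linear_combination (Real.Gamma (a + b + (N:ℝ) + (j:ℝ) + 1) * (a + (j:ℝ) + 1)) * hch

lemma sumzero (a b : ℝ) (ha : -1 < a) (hb : -1 < b) (N : ℕ) (Z : ℕ → ℝ) :
    ∑ j ∈ range (N+1), cc a b N j *
      (-((j:ℝ)*((j:ℝ)+a)) * Z j + ((N-j : ℕ):ℝ)*((N:ℝ)+(j:ℝ)+a+b+1) * Z (j+1)) = 0 := by
  have split : ∀ j ∈ range (N+1), cc a b N j *
      (-((j:ℝ)*((j:ℝ)+a)) * Z j + ((N-j : ℕ):ℝ)*((N:ℝ)+(j:ℝ)+a+b+1) * Z (j+1))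
      = (fun j => cc a b N j * (-((j:ℝ)*((j:ℝ)+a)) * Z j)) j
        + (fun j => cc a b N j * (((N-j : ℕ):ℝ)*((N:ℝ)+(j:ℝ)+a+b+1) * Z (j+1))) j := by
    intro j hj; ring
  rw [Finset.sum_congr rfl split, Finset.sum_add_distrib]
  rw [Finset.sum_range_succ']
  rw [Finset.sum_range_succ]
  simp only [Nat.cast_zero, Nat.sub_self, zero_mul, neg_zero, zero_add, mul_zero, add_zero]
  rw [← Finset.sum_add_distrib]
  apply Finset.sum_eq_zero
  intro j hj
  rw [Finset.mem_range] at hj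
  have hc := cc_rec a b ha hb N j hj
  have hcast : ((N - j : ℕ) : ℝ) = (N:ℝ) - (j:ℝ) := Nat.cast_sub hj.le
  push_cast [hcast]
  linear_combination (-(Z (j+1))) * hc

def qf (a b : ℝ) (N : ℕ) (x y : ℝ) : ℝ :=
  ∑ j ∈ range (N+1), cc a b N j * ((x-y)/2)^j * y^(N-j)
def qfx (a b : ℝ) (N : ℕ) (x y : ℝ) : ℝ :=
  ∑ j ∈ range (N+1), cc a b N j * ((j:ℝ) * ((x-y)/2)^(j-1) * (1/2)) * y^(N-j)
def qfxx (a b : ℝ) (N : ℕ) (x y : ℝ) : ℝ :=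
  ∑ j ∈ range (N+1), cc a b N j * ((j:ℝ) * ((j-1:ℕ):ℝ) * ((x-y)/2)^(j-1-1) * (1/4)) * y^(N-j)
def qfy (a b : ℝ) (N : ℕ) (x y : ℝ) : ℝ :=
  ∑ j ∈ range (N+1), cc a b N j *
    ((j:ℝ) * ((x-y)/2)^(j-1) * (-(1/2)) * y^(N-j) + ((x-y)/2)^j * (((N-j:ℕ):ℝ) * y^(N-j-1)))
def qfxy (a b : ℝ) (N : ℕ) (x y : ℝ) : ℝ :=
  ∑ j ∈ range (N+1), cc a b N j *
    ((j:ℝ) * ((j-1:ℕ):ℝ) * ((x-y)/2)^(j-1-1) * (-(1/4)) * y^(N-j)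
      + (j:ℝ) * ((x-y)/2)^(j-1) * (1/2) * (((N-j:ℕ):ℝ) * y^(N-j-1)))
def qfyy (a b : ℝ) (N : ℕ) (x y : ℝ) : ℝ :=
  ∑ j ∈ range (N+1), cc a b N j *
    ((j:ℝ) * ((j-1:ℕ):ℝ) * ((x-y)/2)^(j-1-1) * (1/4) * y^(N-j)
      + (j:ℝ) * ((x-y)/2)^(j-1) * (-(1/2)) * (((N-j:ℕ):ℝ) * y^(N-j-1))
      + (j:ℝ) * ((x-y)/2)^(j-1) * (-(1/2)) * (((N-j:ℕ):ℝ) * y^(N-j-1))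
      + ((x-y)/2)^j * (((N-j:ℕ):ℝ) * ((N-j-1:ℕ):ℝ) * y^(N-j-1-1)))
def pf (a b : ℝ) (M : ℕ) (y : ℝ) : ℝ :=
  ∑ k ∈ range (M+1), cc a b M k * (y-1)^k
def pf1 (a b : ℝ) (M : ℕ) (y : ℝ) : ℝ :=
  ∑ k ∈ range (M+1), cc a b M k * ((k:ℝ) * (y-1)^(k-1))
def pf2 (a b : ℝ) (M : ℕ) (y : ℝ) : ℝ :=
  ∑ k ∈ range (M+1), cc a b M k * ((k:ℝ) * (((k-1:ℕ):ℝ) * (y-1)^(k-1-1)))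

lemma qf_hasDerivAt_x (a b : ℝ) (N : ℕ) (x y : ℝ) :
    HasDerivAt (fun t => qf a b N t y) (qfx a b N x y) x := by
  unfold qf qfx
  refine HasDerivAt.fun_sum fun j hj => ?_
  have h := ((((hasDerivAt_id x).sub_const y).div_const 2).fun_pow j).const_mul
      (cc a b N j) |>.mul_const (y^(N-j))
  simp only [id_eq] at h
  exact h.congr_deriv (by ring)

lemma qfx_hasDerivAt_x (a b : ℝ) (N : ℕ) (x y : ℝ) :
    HasDerivAt (fun t => qfx a b N t y) (qfxx a b N x y) x := by
  unfold qfx qfxx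
  refine HasDerivAt.fun_sum fun j hj => ?_
  have h := ((((hasDerivAt_id x).sub_const y).div_const 2).fun_pow (j-1)).const_mul
      (cc a b N j * (j:ℝ)) |>.mul_const (1/2 : ℝ) |>.mul_const (y^(N-j))
  have e : (fun t => cc a b N j * ((j:ℝ) * ((t-y)/2)^(j-1) * (1/2)) * y^(N-j))
      = fun t => cc a b N j * (j:ℝ) * ((t-y)/2)^(j-1) * (1/2) * y^(N-j) := by
    funext t; ring
  rw [e]
  simp only [id_eq] at h
  exact h.congr_deriv (by ring)

lemma qf_hasDerivAt_y (a b : ℝ) (N : ℕ) (x y : ℝ) :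
    HasDerivAt (fun s => qf a b N x s) (qfy a b N x y) y := by
  unfold qf qfy
  refine HasDerivAt.fun_sum fun j hj => ?_
  have h := ((((hasDerivAt_id y).const_sub x).div_const 2).fun_pow j).const_mul
      (cc a b N j) |>.fun_mul (hasDerivAt_pow (N-j) y)
  simp only [id_eq] at h
  exact h.congr_deriv (by ring)

lemma qfx_hasDerivAt_y (a b : ℝ) (N : ℕ) (x y : ℝ) :
    HasDerivAt (fun s => qfx a b N x s) (qfxy a b N x y) y := by
  unfold qfx qfxy
  refine HasDerivAt.fun_sum fun j hj => ?_
  have h := (((((hasDerivAt_id y).const_sub x).div_const 2).fun_pow (j-1)).const_mul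
      (cc a b N j * (j:ℝ)) |>.mul_const (1/2 : ℝ)) |>.fun_mul (hasDerivAt_pow (N-j) y)
  have e : (fun s => cc a b N j * ((j:ℝ) * ((x-s)/2)^(j-1) * (1/2)) * s^(N-j))
      = fun s => (cc a b N j * (j:ℝ) * ((x-s)/2)^(j-1) * (1/2)) * s^(N-j) := by
    funext s; ring
  rw [e]
  simp only [id_eq] at h
  exact h.congr_deriv (by ring)

lemma qfy_hasDerivAt_y (a b : ℝ) (N : ℕ) (x y : ℝ) :
    HasDerivAt (fun s => qfy a b N x s) (qfyy a b N x y) y := by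
  unfold qfy qfyy
  refine HasDerivAt.fun_sum fun j hj => ?_
  have hA := ((((((hasDerivAt_id y).const_sub x).div_const 2).fun_pow (j-1)).const_mul
      ((j:ℝ))).mul_const (-(1/2) : ℝ)).fun_mul (hasDerivAt_pow (N-j) y)
  have hB := ((((hasDerivAt_id y).const_sub x).div_const 2).fun_pow j).fun_mul
      ((hasDerivAt_pow (N-j-1) y).const_mul (((N-j:ℕ):ℝ)))
  have h := (hA.fun_add hB).const_mul (cc a b N j)
  simp only [id_eq] at h
  exact h.congr_deriv (by ring)

lemma pf_hasDerivAt (a b : ℝ) (M : ℕ) (y : ℝ) :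
    HasDerivAt (fun s => pf a b M s) (pf1 a b M y) y := by
  unfold pf pf1
  refine HasDerivAt.fun_sum fun k hk => ?_
  have h := (((hasDerivAt_id y).sub_const 1).fun_pow k).const_mul (cc a b M k)
  simp only [id_eq] at h
  exact h.congr_deriv (by ring)

lemma pf1_hasDerivAt (a b : ℝ) (M : ℕ) (y : ℝ) :
    HasDerivAt (fun s => pf1 a b M s) (pf2 a b M y) y := by
  unfold pf1 pf2
  refine HasDerivAt.fun_sum fun k hk => ?_
  have h := ((((hasDerivAt_id y).sub_const 1).fun_pow (k-1)).const_mul ((k:ℝ))).const_mul (cc a b M k)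
  simp only [id_eq] at h
  exact h.congr_deriv (by ring)

lemma euler (a b : ℝ) (N : ℕ) (x y : ℝ) :
    x * qfx a b N x y + y * qfy a b N x y = (N:ℝ) * qf a b N x y := by
  unfold qf qfx qfy
  rw [Finset.mul_sum, Finset.mul_sum, Finset.mul_sum, ← Finset.sum_add_distrib]
  refine Finset.sum_congr rfl fun j hj => ?_
  rw [Finset.mem_range] at hj
  obtain ⟨i, rfl⟩ : ∃ i, N = j + i := ⟨N - j, by omega⟩
  simp only [Nat.add_sub_cancel_left, show j+i-j-1 = i-1 from by omega]
  match j, i with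
  | 0, 0 => simp
  | 0, (i+1) => push_cast; ring
  | (j+1), 0 => push_cast; ring
  | (j+1), (i+1) => push_cast; ring

lemma factA (ap am a0 : ℝ) (hp : -1 < ap) (hm : -1 < am) (N : ℕ) (x y : ℝ) :
    (y - x^2) * qfxx ap am N x y + 2*x*(1-y) * qfxy ap am N x y + y*(1-y) * qfyy ap am N x y
      - ((a0+(ap+am+1)+2)*x + (ap-am)) * qfx ap am N x y
      - ((a0+(ap+am+1)+2)*y - ((ap+am+1)+1)) * qfy ap am N x y
      + (N:ℝ)*((N:ℝ)+a0+(ap+am+1)+1) * qf ap am N x y = 0 := by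
  have h := sumzero ap am hp hm N (fun j => ((x-y)/2)^(j-1) * y^(N-j))
  rw [← h]
  unfold qf qfx qfxx qfy qfxy qfyy
  simp only [Finset.mul_sum, ← Finset.sum_add_distrib, ← Finset.sum_sub_distrib]
  refine Finset.sum_congr rfl fun j hj => ?_
  rw [Finset.mem_range] at hj
  obtain ⟨i, rfl⟩ : ∃ i, N = j + i := ⟨N - j, by omega⟩
  simp only [Nat.add_sub_cancel_left, show j+i-j-1 = i-1 from by omega,
    show j+i-j-1-1 = i-1-1 from by omega, show j+i-(j+1) = i-1 from by omega,
    Nat.add_sub_cancel]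
  match j, i with
  | 0, 0 => push_cast; ring
  | 0, 1 => push_cast; ring
  | 0, (i+2) => push_cast; ring
  | 1, 0 => push_cast; ring
  | 1, 1 => push_cast; ring
  | 1, (i+2) => push_cast; ring
  | (j+2), 0 => push_cast; ring
  | (j+2), 1 => push_cast; ring
  | (j+2), (i+2) => push_cast; ring

lemma factB (a b : ℝ) (ha : -1 < a) (hb : -1 < b) (M : ℕ) (y : ℝ) :
    y*(1-y) * pf2 a b M y + ((b+1) - (a+b+2)*y) * pf1 a b M y
      + (M:ℝ)*((M:ℝ)+a+b+1) * pf a b M y = 0 := by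
  have h := sumzero a b ha hb M (fun k => (y-1)^(k-1))
  rw [← h]
  unfold pf pf1 pf2
  rw [Finset.mul_sum, Finset.mul_sum, Finset.mul_sum, ← Finset.sum_add_distrib,
    ← Finset.sum_add_distrib]
  refine Finset.sum_congr rfl fun k hk => ?_
  rw [Finset.mem_range] at hk
  have hk' : k ≤ M := by omega
  match k, hk' with
  | 0, _ => simp; ring
  | 1, h1 =>
    have hc : ((M-1:ℕ):ℝ) = (M:ℝ)-1 := by
      rw [Nat.cast_sub h1]; norm_num
    simp only [hc]
    norm_num
    ring
  | (k+2), h2 =>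
    have hc : ((M-(k+2):ℕ):ℝ) = (M:ℝ)-((k:ℝ)+2) := by
      rw [Nat.cast_sub h2]; push_cast; ring
    simp only [hc]
    push_cast
    ring

end Stmt17Aux

open Stmt17Aux in
lemma QJ_eq (a b : ℝ) (n : ℕ) (x y : ℝ) :
    QJ a b n x y = Real.Gamma (a + (n:ℝ) + 1) /
      ((n.factorial : ℝ) * Real.Gamma (a + b + (n:ℝ) + 1)) * qf a b n x y := rfl

open Stmt17Aux in
lemma jac_eq (a b : ℝ) (m : ℕ) (y : ℝ) :
    jacobiP a b m (2*y - 1) = Real.Gamma (a + (m:ℝ) + 1) /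
      ((m.factorial : ℝ) * Real.Gamma (a + b + (m:ℝ) + 1)) * pf a b m y := by
  unfold jacobiP pf cc
  congr 1
  refine Finset.sum_congr rfl fun k _ => ?_
  rw [show (2*y - 1 - 1)/2 = y - 1 from by ring]

open Stmt17Aux

/-- **The `v_{n,m}` are eigenfunctions of `(2/κ)𝓛`** with eigenvalue
`λ_{n+m} = -(n+m)(n+m+α₀+β+1)`, i.e. `𝓛 v_{n,m} = (κ/2) λ_{n+m} v_{n,m}`. -/
theorem stmt_17 (κ r0 rp rm a0 ap am β : ℝ) (hκ : 0 < κ)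
    (ha0 : a0 = 2 / κ * (r0 + 2) - 1) (hap : ap = 2 / κ * (rp + 2) - 1)
    (ham : am = 2 / κ * (rm + 2) - 1) (hβ : β = ap + am + 1)
    (h0 : -1 < a0) (hp : -1 < ap) (hm : -1 < am) (n m : ℕ) :
    ∀ p : ℝ × ℝ,
      Lop κ r0 rp rm (vnm ap am a0 β n m) p =
        κ / 2 * (-(((n : ℝ) + (m : ℝ)) * ((n : ℝ) + (m : ℝ) + a0 + β + 1))) *
          vnm ap am a0 β n m p := by
  have hκ' : κ ≠ 0 := hκ.ne'
  have hr0 : r0 = κ*(a0+1)/2 - 2 := by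
    rw [ha0]; field_simp; ring
  have hrp : rp = κ*(ap+1)/2 - 2 := by
    rw [hap]; field_simp; ring
  have hrm : rm = κ*(am+1)/2 - 2 := by
    rw [ham]; field_simp; ring
  subst hβ hr0 hrp hrm
  set b : ℝ := ap + am + 1 + 2*(n:ℝ) with hbdef
  have hb : -1 < b := by
    have : (0:ℝ) ≤ (n:ℝ) := Nat.cast_nonneg n
    simp only [hbdef]; linarith
  set Kp : ℝ := Real.Gamma (a0 + (m:ℝ) + 1) /
      ((m.factorial : ℝ) * Real.Gamma (a0 + b + (m:ℝ) + 1)) with hKp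
  set Kq : ℝ := Real.Gamma (ap + (n:ℝ) + 1) /
      ((n.factorial : ℝ) * Real.Gamma (ap + am + (n:ℝ) + 1)) with hKq
  have hv : ∀ X Y : ℝ, vnm ap am a0 (ap + am + 1) n m (X, Y)
      = Kp * pf a0 b m Y * (Kq * qf ap am n X Y) := by
    intro X Y
    show jacobiP a0 (ap + am + 1 + 2 * (n:ℝ)) m (2 * Y - 1) * QJ ap am n X Y = _
    rw [jac_eq, QJ_eq]
  have hvx : ∀ X Y : ℝ, pdx (vnm ap am a0 (ap + am + 1) n m) (X, Y)
      = Kp * pf a0 b m Y * (Kq * qfx ap am n X Y) := by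
    intro X Y
    show deriv (fun t => vnm ap am a0 (ap + am + 1) n m (t, Y)) X = _
    have e : (fun t => vnm ap am a0 (ap + am + 1) n m (t, Y))
        = fun t => (Kp * pf a0 b m Y * Kq) * qf ap am n t Y := by
      funext t; rw [hv]; ring
    rw [e, ((qf_hasDerivAt_x ap am n X Y).const_mul _).deriv]
    ring
  have hvxx : pdx (pdx (vnm ap am a0 (ap + am + 1) n m)) = fun P =>
      Kp * pf a0 b m P.2 * (Kq * qfxx ap am n P.1 P.2) := by
    funext P
    obtain ⟨X, Y⟩ := P
    show deriv (fun t => pdx (vnm ap am a0 (ap + am + 1) n m) (t, Y)) X = _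
    have e : (fun t => pdx (vnm ap am a0 (ap + am + 1) n m) (t, Y))
        = fun t => (Kp * pf a0 b m Y * Kq) * qfx ap am n t Y := by
      funext t; rw [hvx]; ring
    rw [e, ((qfx_hasDerivAt_x ap am n X Y).const_mul _).deriv]
    ring
  have hvxy : pdy (pdx (vnm ap am a0 (ap + am + 1) n m)) = fun P =>
      Kp * Kq * (pf1 a0 b m P.2 * qfx ap am n P.1 P.2 + pf a0 b m P.2 * qfxy ap am n P.1 P.2) := by
    funext P
    obtain ⟨X, Y⟩ := P
    show deriv (fun s => pdx (vnm ap am a0 (ap + am + 1) n m) (X, s)) Y = _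
    have e : (fun s => pdx (vnm ap am a0 (ap + am + 1) n m) (X, s))
        = fun s => (Kp * Kq) * (pf a0 b m s * qfx ap am n X s) := by
      funext s; rw [hvx]; ring
    rw [e, (((pf_hasDerivAt a0 b m Y).fun_mul (qfx_hasDerivAt_y ap am n X Y)).const_mul _).deriv]
  have hvy : ∀ X Y : ℝ, pdy (vnm ap am a0 (ap + am + 1) n m) (X, Y)
      = Kp * Kq * (pf1 a0 b m Y * qf ap am n X Y + pf a0 b m Y * qfy ap am n X Y) := by
    intro X Y
    show deriv (fun s => vnm ap am a0 (ap + am + 1) n m (X, s)) Y = _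
    have e : (fun s => vnm ap am a0 (ap + am + 1) n m (X, s))
        = fun s => (Kp * Kq) * (pf a0 b m s * qf ap am n X s) := by
      funext s; rw [hv]; ring
    rw [e, (((pf_hasDerivAt a0 b m Y).fun_mul (qf_hasDerivAt_y ap am n X Y)).const_mul _).deriv]
  have hvyy : pdy (pdy (vnm ap am a0 (ap + am + 1) n m)) = fun P =>
      Kp * Kq * ((pf2 a0 b m P.2 * qf ap am n P.1 P.2 + pf1 a0 b m P.2 * qfy ap am n P.1 P.2)
        + (pf1 a0 b m P.2 * qfy ap am n P.1 P.2 + pf a0 b m P.2 * qfyy ap am n P.1 P.2)) := by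
    funext P
    obtain ⟨X, Y⟩ := P
    show deriv (fun s => pdy (vnm ap am a0 (ap + am + 1) n m) (X, s)) Y = _
    have e : (fun s => pdy (vnm ap am a0 (ap + am + 1) n m) (X, s))
        = fun s => (Kp * Kq) * (pf1 a0 b m s * qf ap am n X s + pf a0 b m s * qfy ap am n X s) := by
      funext s; rw [hvy]
    rw [e, ((((pf1_hasDerivAt a0 b m Y).fun_mul (qf_hasDerivAt_y ap am n X Y)).fun_add
      ((pf_hasDerivAt a0 b m Y).fun_mul (qfy_hasDerivAt_y ap am n X Y))).const_mul _).deriv]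
  rintro ⟨X, Y⟩
  have hFA := factA ap am a0 hp hm n X Y
  have hEU := euler ap am n X Y
  have hFB := factB a0 b h0 hb m Y
  unfold Lop
  rw [hvxx, hvxy, hvyy]
  simp only
  rw [hvx, hvy, hv]
  rw [hbdef] at hFB
  linear_combination (κ/2 * Kp * Kq * pf a0 b m Y) * hFA
    + (κ * (1-Y) * Kp * Kq * pf1 a0 b m Y) * hEU
    + (κ/2 * Kp * Kq * qf ap am n X Y) * hFB
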